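/- On a linear order with Start as defined: for every x and every n > 0, if x ≠ a and Start F x (n+1), then Start (fun y => F y ∧ y ≠ a) x n. -/

import Mathlib

/-- Lemma (18): for n > 0, if x ≠ a and Start F x (n+1) then Start (F ∧ ·≠a) x n. -/
theorem start_restrict_of_ne {α : Type*} [LinearOrder α]
    (Start : (α → Prop) → α → ℤ → Prop)
    (h0 : ∀ (P : α → Prop) x (n : ℤ), n ≤ 0 → Start P x n)
    (h1 : ∀ (P : α → Prop) x, Start P x 1 ↔ P x)
    (hsucc : ∀ (P : α → Prop) x (n : ℤ), 1 ≤ n →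
      (Start P x (n + 1) ↔ P x ∧ ∃ u, x < u ∧ Start P u n))
    (F : α → Prop) (a : α) :
    ∀ x (n : ℤ), 0 < n → x ≠ a → Start F x (n + 1) →
      Start (fun y => F y ∧ y ≠ a) x n := by
  -- auxiliary: if a < x then Start F x n → Start G x n
  have aux : ∀ (n : ℤ), 1 ≤ n → ∀ x, a < x → Start F x n →
      Start (fun y => F y ∧ y ≠ a) x n := by
    refine fun n hn => Int.le_induction
      (motive := fun n _ => ∀ x, a < x → Start F x n → Start (fun y => F y ∧ y ≠ a) x n)
      ?_ ?_ n hn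
    · intro x hx hS
      exact (h1 _ x).2 ⟨(h1 _ x).1 hS, ne_of_gt hx⟩
    · intro n hn ih x hx hS
      obtain ⟨hFx, u, hxu, hSu⟩ := (hsucc F x n hn).1 hS
      exact (hsucc _ x n hn).2 ⟨⟨hFx, ne_of_gt hx⟩, u, hxu, ih u (hx.trans hxu) hSu⟩
  have main : ∀ (n : ℤ), 1 ≤ n → ∀ x, x ≠ a → Start F x (n + 1) →
      Start (fun y => F y ∧ y ≠ a) x n := by
    refine fun n hn => Int.le_induction
      (motive := fun n _ => ∀ x, x ≠ a → Start F x (n + 1) → Start (fun y => F y ∧ y ≠ a) x n)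
      ?_ ?_ n hn
    · intro x hxa hS
      obtain ⟨hFx, _⟩ := (hsucc F x 1 le_rfl).1 hS
      exact (h1 _ x).2 ⟨hFx, hxa⟩
    · intro n hn ih x hxa hS
      obtain ⟨hFx, u, hxu, hSu⟩ := (hsucc F x (n + 1) (by omega)).1 hS
      refine (hsucc _ x n hn).2 ⟨⟨hFx, hxa⟩, ?_⟩
      by_cases hua : u = a
      · subst hua
        obtain ⟨hFu, w, huw, hSw⟩ := (hsucc F u n hn).1 hSu
        exact ⟨w, hxu.trans huw, aux n hn w huw hSw⟩
      · exact ⟨u, hxu, ih u hua hSu⟩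
  exact fun x n hn => main n hn x
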